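/- Let N ≥ 1 and x ≥ 0 be real. Define f_N(x) := ∫_0^∞ ∫_0^∞ exp(−r−s) · (4x² + 4x(r+s) + (r−s)²)^N dr ds. Then f_N(x) = e^{2x} · ∑_{j=0}^{N} (N!/j!) · (4x)^{N−j} · Γ(2j+1, 2x), where Γ(a, t) := ∫_t^∞ u^{a−1} e^{−u} du is the upper incomplete Gamma function. -/

import Mathlib

open MeasureTheory Finset

/-- The two-dimensional Laplace-type integral `f_N(x)` arising from the pair of
conjugate characteristic polynomials of the class AII† ensemble. -/
noncomputable def fAII (N : ℕ) (x : ℝ) : ℝ :=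
  ∫ r in Set.Ioi (0 : ℝ), ∫ s in Set.Ioi (0 : ℝ),
    Real.exp (-r - s) * (4 * x ^ 2 + 4 * x * (r + s) + (r - s) ^ 2) ^ N

/-- The upper incomplete Gamma function `Γ(a,t) = ∫_t^∞ u^{a−1} e^{−u} du`. -/
noncomputable def upperGamma (a t : ℝ) : ℝ :=
  ∫ u in Set.Ioi t, u ^ (a - 1) * Real.exp (-u)

open Real Set Filter Topology

noncomputable def Ee (x r s : ℝ) : ℝ := 4 * x ^ 2 + 4 * x * (r + s) + (r - s) ^ 2

lemma Ee_symm (x r s : ℝ) : Ee x r s = Ee x s r := by unfold Ee; ring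

lemma fAII_eq (n : ℕ) (x : ℝ) :
    fAII n x = ∫ r in Set.Ioi (0:ℝ), ∫ s in Set.Ioi (0:ℝ),
      Real.exp (-r - s) * (Ee x r s) ^ n := rfl

/-- one variable integrability of `t^j e^{-t}` -/
lemma int_pow_exp (j : ℕ) :
    IntegrableOn (fun t : ℝ => t ^ j * Real.exp (-t)) (Set.Ioi 0) := by
  have h := Real.GammaIntegral_convergent (s := (j:ℝ)+1) (by positivity)
  refine h.congr_fun (fun t ht => ?_) measurableSet_Ioi
  dsimp only
  rw [add_sub_cancel_right, Real.rpow_natCast, mul_comm]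

/-- one variable integrability of `(1+t)^k e^{-t}` -/
lemma int_onepow_exp (k : ℕ) :
    IntegrableOn (fun t : ℝ => (1 + t) ^ k * Real.exp (-t)) (Set.Ioi 0) := by
  have he : ∀ t : ℝ, (1+t)^k * Real.exp (-t)
      = ∑ j ∈ Finset.range (k+1), (k.choose j : ℝ) * (t^j * Real.exp (-t)) := by
    intro t
    rw [add_comm (1:ℝ) t, add_pow, Finset.sum_mul]
    exact Finset.sum_congr rfl fun j hj => by ring
  simp only [he]
  exact integrable_finset_sum _ fun j _ => (int_pow_exp j).const_mul _

lemma tend_onepow_exp (k : ℕ) :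
    Tendsto (fun t : ℝ => (1 + t) ^ k * Real.exp (-t)) atTop (𝓝 0) := by
  have h := Polynomial.tendsto_div_exp_atTop ((1 + Polynomial.X : Polynomial ℝ)^k)
  simp only [Polynomial.eval_pow, Polynomial.eval_add, Polynomial.eval_one, Polynomial.eval_X,
    div_eq_mul_inv, ← Real.exp_neg] at h
  exact h

/-- master 1-variable integrability lemma -/
lemma integrableOn_of_bound (f : ℝ → ℝ) (hf : AEStronglyMeasurable f (volume.restrict (Set.Ioi 0)))
    (k : ℕ) (C : ℝ)
    (hb : ∀ t ∈ Set.Ioi (0:ℝ), |f t| ≤ C * (1 + t) ^ k) :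
    IntegrableOn (fun t => f t * Real.exp (-t)) (Set.Ioi 0) := by
  refine Integrable.mono' ((int_onepow_exp k).const_mul C) ?_ ?_
  · exact hf.mul (Real.continuous_exp.comp continuous_neg).aestronglyMeasurable
  · rw [ae_restrict_iff' measurableSet_Ioi]
    filter_upwards with t ht
    rw [norm_mul, Real.norm_eq_abs, Real.norm_eq_abs, Real.abs_exp, ← mul_assoc]
    exact mul_le_mul_of_nonneg_right (hb t ht) (Real.exp_pos _).le

/-- master 2-variable integrability lemma -/
lemma integrable_prod_of_bound (f : ℝ → ℝ → ℝ) (hf : Continuous (Function.uncurry f))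
    (k : ℕ) (C : ℝ)
    (hb : ∀ r ∈ Set.Ioi (0:ℝ), ∀ s ∈ Set.Ioi (0:ℝ), |f r s| ≤ C * (1 + r) ^ k * (1 + s) ^ k) :
    Integrable (Function.uncurry (fun r s => Real.exp (-r - s) * f r s))
      ((volume.restrict (Set.Ioi 0)).prod (volume.restrict (Set.Ioi 0))) := by
  have hφ : Integrable (fun t : ℝ => C * ((1+t)^k * Real.exp (-t)))
      (volume.restrict (Set.Ioi 0)) := (int_onepow_exp k).const_mul C
  have hψ : Integrable (fun t : ℝ => (1+t)^k * Real.exp (-t))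
      (volume.restrict (Set.Ioi 0)) := int_onepow_exp k
  refine (Integrable.mul_prod hφ hψ).mono' ?_ ?_
  · exact ((Real.continuous_exp.comp (continuous_fst.neg.sub continuous_snd)).mul hf).aestronglyMeasurable
  · rw [Measure.prod_restrict, ae_restrict_iff' (measurableSet_Ioi.prod measurableSet_Ioi)]
    filter_upwards with p hp
    obtain ⟨hp1, hp2⟩ := hp
    have hb' := hb p.1 hp1 p.2 hp2
    have e1 : Real.exp (-p.1 - p.2) = Real.exp (-p.1) * Real.exp (-p.2) := by
      rw [← Real.exp_add]; ring_nf
    have huc : Function.uncurry (fun r s => Real.exp (-r - s) * f r s) p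
        = Real.exp (-p.1 - p.2) * f p.1 p.2 := rfl
    rw [huc, norm_mul, Real.norm_eq_abs, Real.norm_eq_abs, Real.abs_exp]
    calc Real.exp (-p.1 - p.2) * |f p.1 p.2|
        ≤ Real.exp (-p.1 - p.2) * (C * (1+p.1)^k * (1+p.2)^k) :=
          mul_le_mul_of_nonneg_left hb' (Real.exp_pos _).le
      _ = C * ((1+p.1)^k * Real.exp (-p.1)) * ((1+p.2)^k * Real.exp (-p.2)) := by
          rw [e1]; ring

lemma Ee_nonneg {x r s : ℝ} (hx : 0 ≤ x) (hr : 0 ≤ r) (hs : 0 ≤ s) : 0 ≤ Ee x r s := by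
  unfold Ee; positivity

lemma Ee_le {x r s : ℝ} (hx : 0 ≤ x) (hr : 0 ≤ r) (hs : 0 ≤ s) :
    Ee x r s ≤ ((2*x+1) * (1+r) * (1+s)) ^ 2 := by
  unfold Ee; nlinarith [mul_nonneg hr hs, mul_nonneg hx hr, mul_nonneg hx hs,
    mul_nonneg (mul_nonneg hx hr) hs, sq_nonneg (r - s), sq_nonneg (r + s),
    mul_nonneg (mul_nonneg hr hs) hx, sq_nonneg x]

lemma Ederiv_le {x r s : ℝ} (hx : 0 ≤ x) (hr : 0 ≤ r) (hs : 0 ≤ s) :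
    |4*x + 2*(s - r)| ≤ 2 * ((2*x+1) * (1+r) * (1+s)) := by
  rw [abs_le]; constructor <;> nlinarith [mul_nonneg hr hs, mul_nonneg hx hr, mul_nonneg hx hs,
    mul_nonneg (mul_nonneg hx hr) hs]

/-- Bound on `E^n`. -/
lemma bound_pow {x r s : ℝ} (hx : 0 ≤ x) (hr : 0 ≤ r) (hs : 0 ≤ s) (n : ℕ) :
    |(Ee x r s) ^ n| ≤ ((2*x+1) * (1+r)) ^ (2*n) * (1+s) ^ (2*n) := by
  rw [abs_of_nonneg (pow_nonneg (Ee_nonneg hx hr hs) n)]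
  calc (Ee x r s) ^ n ≤ (((2*x+1) * (1+r) * (1+s)) ^ 2) ^ n :=
        pow_le_pow_left₀ (Ee_nonneg hx hr hs) (Ee_le hx hr hs) n
    _ = ((2*x+1) * (1+r)) ^ (2*n) * (1+s) ^ (2*n) := by
        rw [← pow_mul, mul_pow]

/-- Bound on the derivative factor. -/
lemma bound_deriv {x r s : ℝ} (hx : 0 ≤ x) (hr : 0 ≤ r) (hs : 0 ≤ s) (n : ℕ) :
    |(n:ℝ) * (Ee x r s) ^ (n-1) * (4*x + 2*(s - r))|
      ≤ (2*n+1) * ((2*x+1) * (1+r)) ^ (2*n) * (1+s) ^ (2*n) := by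
  have c1 : (0:ℝ) ≤ (2*x+1) * (1+r) * (1+s) := by positivity
  have hd1 : (1:ℝ) ≤ (2*x+1) * (1+r) * (1+s) := by
    nlinarith [mul_nonneg hr hs, mul_nonneg hx hr, mul_nonneg hx hs,
      mul_nonneg (mul_nonneg hx hr) hs]
  set d := (2*x+1) * (1+r) * (1+s) with hdd
  have hE0 := Ee_nonneg hx hr hs
  have hE2 : Ee x r s ≤ d^2 := Ee_le hx hr hs
  have hD : |4*x + 2*(s - r)| ≤ 2*d := Ederiv_le hx hr hs
  have hsplit : ((2*x+1) * (1+r)) ^ (2*n) * (1+s) ^ (2*n) = d ^ (2*n) := by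
    rw [hdd, mul_pow ((2*x+1) * (1+r))]
  rw [mul_assoc (2*(n:ℝ)+1), hsplit]
  rcases Nat.eq_zero_or_pos n with h0 | hpos
  · subst h0; simp
  obtain ⟨m, rfl⟩ := Nat.exists_eq_succ_of_ne_zero hpos.ne'
  have hm1 : m + 1 - 1 = m := rfl
  rw [hm1]
  have hEm : (Ee x r s) ^ m ≤ d ^ (2*m) := by
    calc (Ee x r s) ^ m ≤ (d^2) ^ m := pow_le_pow_left₀ hE0 hE2 m
      _ = d ^ (2*m) := by rw [← pow_mul]
  have hdp : d ^ (2*m+1) ≤ d ^ (2*(m+1)) := pow_le_pow_right₀ hd1 (by omega)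
  have hcast : (0:ℝ) ≤ ((m+1 : ℕ) : ℝ) := by positivity
  rw [abs_mul, abs_mul, abs_of_nonneg hcast, abs_of_nonneg (pow_nonneg hE0 m)]
  have step1 : ((m+1 : ℕ) : ℝ) * (Ee x r s) ^ m * |4*x + 2*(s - r)|
      ≤ ((m+1 : ℕ) : ℝ) * d ^ (2*m) * (2*d) := by
    apply mul_le_mul _ hD (abs_nonneg _) (by positivity)
    exact mul_le_mul_of_nonneg_left hEm hcast
  have step2 : ((m+1 : ℕ) : ℝ) * d ^ (2*m) * (2*d) = 2*((m+1 : ℕ) : ℝ) * d ^ (2*m+1) := by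
    rw [pow_succ]; ring
  have step3 : 2*((m+1 : ℕ) : ℝ) * d ^ (2*m+1) ≤ 2*((m+1 : ℕ) : ℝ) * d ^ (2*(m+1)) := by
    apply mul_le_mul_of_nonneg_left hdp (by positivity)
  calc ((m+1 : ℕ) : ℝ) * (Ee x r s) ^ m * |4*x + 2*(s - r)|
      ≤ 2*((m+1 : ℕ) : ℝ) * d ^ (2*(m+1)) := by
        rw [← step2] at step3; exact le_trans step1 step3
    _ ≤ (2*((m+1 : ℕ) : ℝ)+1) * d ^ (2*(m+1)) := by
        apply mul_le_mul_of_nonneg_right _ (pow_nonneg (by linarith) _)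
        linarith

/-- Bound on the FTC integrand. -/
lemma bound_main {x r s : ℝ} (hx : 0 ≤ x) (hr : 0 ≤ r) (hs : 0 ≤ s) (n : ℕ) :
    |(n:ℝ) * (Ee x r s) ^ (n-1) * (4*x + 2*(s - r)) - (Ee x r s) ^ n|
      ≤ (2*n+2) * ((2*x+1) * (1+r)) ^ (2*n) * (1+s) ^ (2*n) := by
  calc |(n:ℝ) * (Ee x r s) ^ (n-1) * (4*x + 2*(s - r)) - (Ee x r s) ^ n|
      ≤ |(n:ℝ) * (Ee x r s) ^ (n-1) * (4*x + 2*(s - r))| + |(Ee x r s) ^ n| :=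
        abs_sub _ _
    _ ≤ (2*n+1) * ((2*x+1) * (1+r)) ^ (2*n) * (1+s) ^ (2*n)
        + ((2*x+1) * (1+r)) ^ (2*n) * (1+s) ^ (2*n) :=
        add_le_add (bound_deriv hx hr hs n) (bound_pow hx hr hs n)
    _ = (2*n+2) * ((2*x+1) * (1+r)) ^ (2*n) * (1+s) ^ (2*n) := by ring

lemma cont_Ee (x r : ℝ) : Continuous (fun s => Ee x r s) := by
  unfold Ee; fun_prop

lemma exp_split (r s : ℝ) : Real.exp (-r - s) = Real.exp (-r) * Real.exp (-s) := by
  rw [← Real.exp_add]; ring_nf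

/-- integrability (in s) of `e^{-r-s} E^n` -/
lemma int_inner_pow {x : ℝ} (hx : 0 ≤ x) {r : ℝ} (hr : 0 ≤ r) (n : ℕ) :
    IntegrableOn (fun s => Real.exp (-r - s) * (Ee x r s) ^ n) (Set.Ioi 0) := by
  have he : ∀ s : ℝ, Real.exp (-r - s) * (Ee x r s) ^ n
      = (Real.exp (-r) * (Ee x r s) ^ n) * Real.exp (-s) := fun s => by
    rw [exp_split]; ring
  simp only [he]
  refine integrableOn_of_bound _ ?_ (2*n) (((2*x+1) * (1+r)) ^ (2*n)) ?_
  · exact (continuous_const.mul ((cont_Ee x r).pow n)).aestronglyMeasurable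
  · intro t ht
    have ht' : (0:ℝ) ≤ t := (le_of_lt ht)
    rw [abs_mul, Real.abs_exp]
    calc Real.exp (-r) * |(Ee x r t) ^ n| ≤ 1 * |(Ee x r t) ^ n| := by
          apply mul_le_mul_of_nonneg_right _ (abs_nonneg _)
          exact Real.exp_le_one_iff.mpr (by linarith)
      _ = |(Ee x r t) ^ n| := one_mul _
      _ ≤ ((2*x+1) * (1+r)) ^ (2*n) * (1+t) ^ (2*n) := bound_pow hx hr ht' n

/-- integrability (in s) of the derivative integrand -/
lemma int_inner_deriv {x : ℝ} (hx : 0 ≤ x) {r : ℝ} (hr : 0 ≤ r) (n : ℕ) :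
    IntegrableOn (fun s => Real.exp (-r - s) *
      ((n:ℝ) * (Ee x r s) ^ (n-1) * (4*x + 2*(s - r)))) (Set.Ioi 0) := by
  have he : ∀ s : ℝ, Real.exp (-r - s) * ((n:ℝ) * (Ee x r s) ^ (n-1) * (4*x + 2*(s - r)))
      = (Real.exp (-r) * ((n:ℝ) * (Ee x r s) ^ (n-1) * (4*x + 2*(s - r)))) * Real.exp (-s) :=
    fun s => by rw [exp_split]; ring
  simp only [he]
  refine integrableOn_of_bound _ ?_ (2*n) ((2*n+1) * ((2*x+1) * (1+r)) ^ (2*n)) ?_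
  · apply Continuous.aestronglyMeasurable
    apply continuous_const.mul
    exact (continuous_const.mul ((cont_Ee x r).pow (n-1))).mul (by fun_prop)
  · intro t ht
    have ht' : (0:ℝ) ≤ t := (le_of_lt ht)
    rw [abs_mul, Real.abs_exp]
    calc Real.exp (-r) * |(n:ℝ) * (Ee x r t) ^ (n-1) * (4*x + 2*(t - r))|
        ≤ 1 * |(n:ℝ) * (Ee x r t) ^ (n-1) * (4*x + 2*(t - r))| := by
          apply mul_le_mul_of_nonneg_right _ (abs_nonneg _)
          exact Real.exp_le_one_iff.mpr (by linarith)
      _ = |(n:ℝ) * (Ee x r t) ^ (n-1) * (4*x + 2*(t - r))| := one_mul _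
      _ ≤ (2*n+1) * ((2*x+1) * (1+r)) ^ (2*n) * (1+t) ^ (2*n) := bound_deriv hx hr ht' n
      _ = (2*n+1) * ((2*x+1) * (1+r)) ^ (2*n) * (1+t) ^ (2*n) := rfl

/-- the FTC step: for fixed `r ≥ 0`, integrate the `s`-derivative of `e^{-r-s} E^n`. -/
lemma ftc_step {x : ℝ} (hx : 0 ≤ x) {r : ℝ} (hr : 0 ≤ r) (n : ℕ) :
    ∫ s in Set.Ioi (0:ℝ), Real.exp (-r - s) *
        ((n:ℝ) * (Ee x r s) ^ (n-1) * (4*x + 2*(s - r)) - (Ee x r s) ^ n)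
      = -(Real.exp (-r) * (2*x + r) ^ (2*n)) := by
  have hder : ∀ s ∈ Set.Ici (0:ℝ),
      HasDerivAt (fun s => Real.exp (-r - s) * (Ee x r s) ^ n)
        (Real.exp (-r - s) *
          ((n:ℝ) * (Ee x r s) ^ (n-1) * (4*x + 2*(s - r)) - (Ee x r s) ^ n)) s := by
    intro s _
    have h2 : HasDerivAt (fun s : ℝ => r + s) 1 s := (hasDerivAt_id s).const_add r
    have h3 : HasDerivAt (fun s : ℝ => r - s) (-1) s := by
      simpa using (hasDerivAt_id s).const_sub r
    have h1 : HasDerivAt (fun s : ℝ => Ee x r s) (4*x + 2*(s - r)) s := by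
      unfold Ee
      have ha := ((h2.const_mul (4*x)).const_add (4*x^2)).add (h3.pow 2)
      refine ha.congr_deriv ?_
      simp; ring
    have hexp : HasDerivAt (fun s : ℝ => Real.exp (-r - s)) (-Real.exp (-r - s)) s := by
      have h4 : HasDerivAt (fun s : ℝ => -r - s) (-1) s := by
        simpa using (hasDerivAt_id s).const_sub (-r)
      have := (Real.hasDerivAt_exp (-r - s)).comp s h4
      simpa [mul_comm, Function.comp_def] using this
    have := hexp.mul (h1.pow n)
    refine this.congr_deriv ?_
    simp only [Pi.pow_apply]
    ring
  have hint : IntegrableOn (fun s => Real.exp (-r - s) *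
      ((n:ℝ) * (Ee x r s) ^ (n-1) * (4*x + 2*(s - r)) - (Ee x r s) ^ n)) (Set.Ioi 0) := by
    have h5 : IntegrableOn
        ((fun s => Real.exp (-r - s) * ((n:ℝ) * (Ee x r s) ^ (n-1) * (4*x + 2*(s - r))))
          - fun s => Real.exp (-r - s) * (Ee x r s) ^ n) (Set.Ioi 0) :=
      (int_inner_deriv hx hr n).sub (int_inner_pow hx hr n)
    refine h5.congr_fun (fun s _ => ?_) measurableSet_Ioi
    simp only [Pi.sub_apply]
    ring
  have htend : Tendsto (fun s => Real.exp (-r - s) * (Ee x r s) ^ n) atTop (𝓝 0) := by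
    have hb : ∀ᶠ s in atTop, |Real.exp (-r - s) * (Ee x r s) ^ n|
        ≤ ((2*x+1) * (1+r)) ^ (2*n) * ((1 + s) ^ (2*n) * Real.exp (-s)) := by
      filter_upwards [eventually_ge_atTop (0:ℝ)] with s hs
      rw [abs_mul, Real.abs_exp, exp_split]
      calc Real.exp (-r) * Real.exp (-s) * |(Ee x r s) ^ n|
          ≤ 1 * Real.exp (-s) * |(Ee x r s) ^ n| := by
            apply mul_le_mul_of_nonneg_right _ (abs_nonneg _)
            exact mul_le_mul_of_nonneg_right (Real.exp_le_one_iff.mpr (by linarith))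
              (Real.exp_pos _).le
        _ = |(Ee x r s) ^ n| * Real.exp (-s) := by ring
        _ ≤ (((2*x+1) * (1+r)) ^ (2*n) * (1+s) ^ (2*n)) * Real.exp (-s) :=
            mul_le_mul_of_nonneg_right (bound_pow hx hr hs n) (Real.exp_pos _).le
        _ = ((2*x+1) * (1+r)) ^ (2*n) * ((1 + s) ^ (2*n) * Real.exp (-s)) := by ring
    have hlim : Tendsto (fun s : ℝ => ((2*x+1) * (1+r)) ^ (2*n) *
        ((1 + s) ^ (2*n) * Real.exp (-s))) atTop (𝓝 0) := by
      simpa using (tend_onepow_exp (2*n)).const_mul (((2*x+1) * (1+r)) ^ (2*n))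
    have habs : Tendsto (fun s => |Real.exp (-r - s) * (Ee x r s) ^ n|) atTop (𝓝 0) := by
      apply squeeze_zero' (Eventually.of_forall fun s => abs_nonneg _) hb hlim
    exact (tendsto_zero_iff_abs_tendsto_zero _).mpr habs
  have key := integral_Ioi_of_hasDerivAt_of_tendsto' hder hint htend
  rw [key]
  have h0 : Ee x r 0 = (2*x + r) ^ 2 := by unfold Ee; ring
  rw [zero_sub, h0, ← pow_mul]
  norm_num

/-- rearranged FTC step -/
lemma ftc_step' {x : ℝ} (hx : 0 ≤ x) {r : ℝ} (hr : 0 ≤ r) (n : ℕ) :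
    ∫ s in Set.Ioi (0:ℝ), Real.exp (-r - s) *
        ((n:ℝ) * (Ee x r s) ^ (n-1) * (4*x + 2*(s - r)))
      = (∫ s in Set.Ioi (0:ℝ), Real.exp (-r - s) * (Ee x r s) ^ n)
        - Real.exp (-r) * (2*x + r) ^ (2*n) := by
  have h1 := ftc_step hx hr n
  have h0 : ∀ s : ℝ, Real.exp (-r-s) *
      ((n:ℝ) * (Ee x r s)^(n-1) * (4*x + 2*(s-r)) - (Ee x r s)^n)
      = Real.exp (-r-s) * ((n:ℝ) * (Ee x r s)^(n-1) * (4*x + 2*(s-r)))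
        - Real.exp (-r-s) * (Ee x r s)^n := fun s => by ring
  simp only [h0] at h1
  rw [integral_sub (int_inner_deriv hx hr n) (int_inner_pow hx hr n)] at h1
  linarith

/-- product integrability of `e^{-r-s} E^n` -/
lemma prod_int_pow {x : ℝ} (hx : 0 ≤ x) (n : ℕ) :
    Integrable (Function.uncurry (fun r s => Real.exp (-r - s) * (Ee x r s) ^ n))
      ((volume.restrict (Set.Ioi 0)).prod (volume.restrict (Set.Ioi 0))) := by
  have hc : Continuous (Function.uncurry (fun r s => (Ee x r s) ^ n)) := by
    unfold Ee Function.uncurry; fun_prop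
  refine integrable_prod_of_bound _ hc (2*n) ((2*x+1) ^ (2*n)) ?_
  intro r hr s hs
  calc |(Ee x r s) ^ n|
      ≤ ((2*x+1) * (1+r)) ^ (2*n) * (1+s) ^ (2*n) :=
        bound_pow hx (le_of_lt hr) (le_of_lt hs) n
    _ = (2*x+1) ^ (2*n) * (1+r) ^ (2*n) * (1+s) ^ (2*n) := by rw [mul_pow]

/-- product integrability of the `E₁` integrand -/
lemma prod_int_deriv {x : ℝ} (hx : 0 ≤ x) (n : ℕ) :
    Integrable (Function.uncurry (fun r s => Real.exp (-r - s) *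
      ((n:ℝ) * (Ee x r s) ^ (n-1) * (4*x + 2*(r - s)))))
      ((volume.restrict (Set.Ioi 0)).prod (volume.restrict (Set.Ioi 0))) := by
  have hc : Continuous (Function.uncurry
      (fun r s => (n:ℝ) * (Ee x r s) ^ (n-1) * (4*x + 2*(r - s)))) := by
    unfold Ee Function.uncurry; fun_prop
  refine integrable_prod_of_bound _ hc (2*n) ((2*n+1) * (2*x+1) ^ (2*n)) ?_
  intro r hr s hs
  have hb := bound_deriv hx (le_of_lt hs) (le_of_lt hr) n
  rw [Ee_symm x s r] at hb
  calc |(n:ℝ) * (Ee x r s) ^ (n-1) * (4*x + 2*(r - s))|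
      ≤ (2*n+1) * ((2*x+1) * (1+s)) ^ (2*n) * (1+r) ^ (2*n) := hb
    _ = (2*n+1) * (2*x+1) ^ (2*n) * (1+r) ^ (2*n) * (1+s) ^ (2*n) := by
        rw [mul_pow]; ring

noncomputable def II (x : ℝ) (n : ℕ) : ℝ := ∫ r in Set.Ioi (0:ℝ), Real.exp (-r) * (2*x + r) ^ (2*n)

lemma II_integrable {x : ℝ} (hx : 0 ≤ x) (n : ℕ) :
    IntegrableOn (fun r => Real.exp (-r) * (2*x + r) ^ (2*n)) (Set.Ioi 0) := by
  have he : ∀ r : ℝ, Real.exp (-r) * (2*x+r)^(2*n) = (2*x+r)^(2*n) * Real.exp (-r) :=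
    fun r => mul_comm _ _
  simp only [he]
  refine integrableOn_of_bound _ (Continuous.aestronglyMeasurable (by fun_prop)) (2*n) ((2*x+1)^(2*n)) ?_
  intro t ht
  have ht' : (0:ℝ) ≤ t := le_of_lt ht
  have h1 : (0:ℝ) ≤ 2*x + t := by linarith
  rw [abs_of_nonneg (pow_nonneg h1 _)]
  calc (2*x+t)^(2*n) ≤ ((2*x+1) * (1+t))^(2*n) :=
        pow_le_pow_left₀ h1 (by nlinarith) _
    _ = (2*x+1)^(2*n) * (1+t)^(2*n) := mul_pow _ _ _

/-- the recursion -/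
lemma fAII_rec {x : ℝ} (hx : 0 ≤ x) (n : ℕ) :
    fAII (n+1) x = II x (n+1) + 4*x*(n+1) * fAII n x := by
  have hPn := prod_int_pow hx (n+1)
  have hPm := prod_int_pow hx n
  have hPd := prod_int_deriv hx (n+1)
  simp only [Nat.add_sub_cancel] at hPd
  push_cast at hPd
  have hGn : Integrable (fun r => ∫ s in Set.Ioi (0:ℝ), Real.exp (-r-s) * (Ee x r s)^(n+1))
      (volume.restrict (Set.Ioi 0)) := hPn.integral_prod_left
  have hGm : Integrable (fun r => ∫ s in Set.Ioi (0:ℝ), Real.exp (-r-s) * (Ee x r s)^n)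
      (volume.restrict (Set.Ioi 0)) := hPm.integral_prod_left
  have hGs : Integrable (fun s => ∫ r in Set.Ioi (0:ℝ), Real.exp (-r-s) * (Ee x r s)^(n+1))
      (volume.restrict (Set.Ioi 0)) := hPn.swap.integral_prod_left
  have hIm : Integrable (fun s : ℝ => Real.exp (-s) * (2*x+s)^(2*(n+1)))
      (volume.restrict (Set.Ioi 0)) := II_integrable hx (n+1)
  have claim1 : (∫ r in Set.Ioi (0:ℝ), ∫ s in Set.Ioi (0:ℝ),
      Real.exp (-r-s) * (((n:ℝ)+1) * (Ee x r s)^n * (4*x + 2*(r - s))))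
      = 8*x*((n:ℝ)+1) * fAII n x - fAII (n+1) x + II x (n+1) := by
    have inner_eq : ∀ r ∈ Set.Ioi (0:ℝ),
        (∫ s in Set.Ioi (0:ℝ),
            Real.exp (-r-s) * (((n:ℝ)+1) * (Ee x r s)^n * (4*x + 2*(r - s))))
        = (8*x*((n:ℝ)+1) * (∫ s in Set.Ioi (0:ℝ), Real.exp (-r-s) * (Ee x r s)^n)
          - (∫ s in Set.Ioi (0:ℝ), Real.exp (-r-s) * (Ee x r s)^(n+1)))
          + Real.exp (-r) * (2*x+r)^(2*(n+1)) := by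
      intro r hr
      have hr' : (0:ℝ) ≤ r := le_of_lt hr
      have h1 := ftc_step' hx hr' (n+1)
      simp only [Nat.add_sub_cancel] at h1
      push_cast at h1
      have hint1 : IntegrableOn (fun s => Real.exp (-r-s) *
          (((n:ℝ)+1) * (Ee x r s)^n * (4*x + 2*(s - r)))) (Set.Ioi 0) := by
        have h2 := int_inner_deriv hx hr' (n+1)
        simp only [Nat.add_sub_cancel] at h2
        push_cast at h2
        exact h2
      have hint2 : IntegrableOn (fun s => 8*x*((n:ℝ)+1) *
          (Real.exp (-r-s) * (Ee x r s)^n)) (Set.Ioi 0) :=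
        (int_inner_pow hx hr' n).const_mul _
      have heq : ∀ s : ℝ, Real.exp (-r-s) * (((n:ℝ)+1) * (Ee x r s)^n * (4*x + 2*(r - s)))
          = 8*x*((n:ℝ)+1) * (Real.exp (-r-s) * (Ee x r s)^n)
            - Real.exp (-r-s) * (((n:ℝ)+1) * (Ee x r s)^n * (4*x + 2*(s - r))) :=
        fun s => by ring
      rw [setIntegral_congr_fun measurableSet_Ioi (fun s _ => heq s)]
      rw [integral_sub hint2 hint1, integral_const_mul, h1]
      ring
    calc (∫ r in Set.Ioi (0:ℝ), ∫ s in Set.Ioi (0:ℝ),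
        Real.exp (-r-s) * (((n:ℝ)+1) * (Ee x r s)^n * (4*x + 2*(r - s))))
        = ∫ r in Set.Ioi (0:ℝ),
            ((8*x*((n:ℝ)+1) * (∫ s in Set.Ioi (0:ℝ), Real.exp (-r-s) * (Ee x r s)^n)
            - (∫ s in Set.Ioi (0:ℝ), Real.exp (-r-s) * (Ee x r s)^(n+1)))
            + Real.exp (-r) * (2*x+r)^(2*(n+1))) :=
          setIntegral_congr_fun measurableSet_Ioi inner_eq
      _ = (8*x*((n:ℝ)+1) * (∫ r in Set.Ioi (0:ℝ), ∫ s in Set.Ioi (0:ℝ),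
              Real.exp (-r-s) * (Ee x r s)^n)
          - (∫ r in Set.Ioi (0:ℝ), ∫ s in Set.Ioi (0:ℝ),
              Real.exp (-r-s) * (Ee x r s)^(n+1)))
          + II x (n+1) := by
          have hf : Integrable (fun r =>
              8*x*((n:ℝ)+1) * (∫ s in Set.Ioi (0:ℝ), Real.exp (-r-s) * (Ee x r s)^n)
              - (∫ s in Set.Ioi (0:ℝ), Real.exp (-r-s) * (Ee x r s)^(n+1)))
              (volume.restrict (Set.Ioi 0)) := (hGm.const_mul _).sub hGn
          rw [integral_add hf hIm, integral_sub (hGm.const_mul _) hGn, integral_const_mul]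
          rfl
      _ = 8*x*((n:ℝ)+1) * fAII n x - fAII (n+1) x + II x (n+1) := by
          rw [← fAII_eq, ← fAII_eq]
  have claim2 : (∫ r in Set.Ioi (0:ℝ), ∫ s in Set.Ioi (0:ℝ),
      Real.exp (-r-s) * (((n:ℝ)+1) * (Ee x r s)^n * (4*x + 2*(r - s))))
      = fAII (n+1) x - II x (n+1) := by
    rw [integral_integral_swap hPd]
    have inner2 : ∀ s ∈ Set.Ioi (0:ℝ),
        (∫ r in Set.Ioi (0:ℝ),
            Real.exp (-r-s) * (((n:ℝ)+1) * (Ee x r s)^n * (4*x + 2*(r - s))))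
        = (∫ r in Set.Ioi (0:ℝ), Real.exp (-r-s) * (Ee x r s)^(n+1))
          - Real.exp (-s) * (2*x+s)^(2*(n+1)) := by
      intro s hs
      have hs' : (0:ℝ) ≤ s := le_of_lt hs
      have h1 := ftc_step' hx hs' (n+1)
      simp only [Nat.add_sub_cancel] at h1
      push_cast at h1
      have hcong : ∀ r : ℝ, Real.exp (-r-s) * (((n:ℝ)+1) * (Ee x r s)^n * (4*x + 2*(r - s)))
          = Real.exp (-s-r) * (((n:ℝ)+1) * (Ee x s r)^n * (4*x + 2*(r - s))) := by
        intro r; rw [Ee_symm x s r]; ring_nf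
      have hcong2 : ∀ r : ℝ, Real.exp (-s-r) * (Ee x s r)^(n+1)
          = Real.exp (-r-s) * (Ee x r s)^(n+1) := by
        intro r; rw [Ee_symm x s r]; ring_nf
      rw [setIntegral_congr_fun measurableSet_Ioi (fun r _ => hcong r), h1,
        setIntegral_congr_fun measurableSet_Ioi (fun r _ => hcong2 r)]
    rw [setIntegral_congr_fun measurableSet_Ioi inner2, integral_sub hGs hIm]
    have hswap : fAII (n+1) x = ∫ s in Set.Ioi (0:ℝ), ∫ r in Set.Ioi (0:ℝ),
        Real.exp (-r-s) * (Ee x r s)^(n+1) := by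
      rw [fAII_eq]
      exact integral_integral_swap hPn
    rw [← hswap]
    rfl
  have hkey := claim1.symm.trans claim2
  linarith [hkey]

lemma shift_integral (c : ℝ) (f : ℝ → ℝ) :
    ∫ u in Set.Ioi c, f u = ∫ t in Set.Ioi (0:ℝ), f (t + c) := by
  have hemb : MeasurableEmbedding (fun t : ℝ => t + c) :=
    (Homeomorph.addRight c).isClosedEmbedding.measurableEmbedding
  have h := hemb.setIntegral_map (μ := volume) f (Set.Ioi c)
  rw [map_add_right_eq_self] at h
  rw [h]
  congr 1
  ext t
  simp

lemma II_eq {x : ℝ} (hx : 0 ≤ x) (n : ℕ) :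
    II x n = Real.exp (2*x) * upperGamma (2*n+1) (2*x) := by
  unfold II upperGamma
  have hcast : (2*(n:ℝ)+1-1) = ((2*n : ℕ) : ℝ) := by push_cast; ring
  rw [hcast, shift_integral (2*x), ← integral_const_mul]
  refine setIntegral_congr_fun measurableSet_Ioi fun t ht => ?_
  rw [Real.rpow_natCast]
  rw [show -(t + 2*x) = -t + -(2*x) by ring, Real.exp_add, Real.exp_neg]
  have h2 : Real.exp (2*x) ≠ 0 := Real.exp_ne_zero _
  field_simp
  have h3 : Real.exp (2*x) * Real.exp (-(2*x)) = 1 := by rw [← Real.exp_add]; simp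
  linear_combination (-(t + 2*x)^(2*n)) * h3

lemma fAII_zero {x : ℝ} (hx : 0 ≤ x) : fAII 0 x = 1 := by
  have inner : ∀ r : ℝ, (∫ s in Set.Ioi (0:ℝ), Real.exp (-r - s)) = Real.exp (-r) := by
    intro r
    have : ∀ s : ℝ, Real.exp (-r - s) = Real.exp (-r) * Real.exp (-s) := fun s => exp_split r s
    simp only [this]
    rw [integral_const_mul, integral_exp_neg_Ioi_zero, mul_one]
  calc fAII 0 x = ∫ r in Set.Ioi (0:ℝ), Real.exp (-r) := by
        unfold fAII
        simp only [pow_zero, mul_one]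
        exact setIntegral_congr_fun measurableSet_Ioi fun r _ => inner r
    _ = 1 := integral_exp_neg_Ioi_zero

lemma main_all (x : ℝ) (hx : 0 ≤ x) (N : ℕ) :
    fAII N x = Real.exp (2 * x) *
      ∑ j ∈ Finset.range (N + 1),
        ((Nat.factorial N : ℝ) / (Nat.factorial j : ℝ)) * (4 * x) ^ (N - j) *
          upperGamma (2 * j + 1) (2 * x) := by
  induction N with
  | zero =>
      rw [fAII_zero hx]
      have hg : upperGamma 1 (2*x) = Real.exp (-(2*x)) := by
        unfold upperGamma
        norm_num
        exact integral_exp_Iic _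
      simp only [Finset.sum_range_one, Nat.factorial_zero, Nat.cast_one, div_one,
        Nat.sub_self, pow_zero, one_mul, Nat.cast_zero, mul_zero, zero_add]
      rw [hg, ← Real.exp_add]
      norm_num
  | succ n ih =>
      rw [fAII_rec hx n, ih, II_eq hx (n+1)]
      have hfac : (Nat.factorial (n+1) : ℝ) ≠ 0 := by positivity
      have hsum : ∑ j ∈ Finset.range (n+1),
          ((Nat.factorial (n+1) : ℝ) / (Nat.factorial j : ℝ)) * (4*x) ^ (n+1-j)
            * upperGamma (2*j+1) (2*x)
          = 4*x*((n:ℝ)+1) * ∑ j ∈ Finset.range (n+1),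
            ((Nat.factorial n : ℝ) / (Nat.factorial j : ℝ)) * (4*x) ^ (n-j)
              * upperGamma (2*j+1) (2*x) := by
        rw [Finset.mul_sum]
        refine Finset.sum_congr rfl fun j hj => ?_
        have hj' : j ≤ n := Nat.lt_succ_iff.mp (Finset.mem_range.mp hj)
        have h1 : n + 1 - j = (n - j) + 1 := by omega
        rw [h1, pow_succ, Nat.factorial_succ]
        push_cast
        ring
      conv_rhs => rw [Finset.sum_range_succ]
      rw [hsum]
      simp only [Nat.sub_self, pow_zero, div_self hfac, one_mul, mul_one]
      ring

/-- Summation formula: `f_N(x) = e^{2x} ∑_{j=0}^N (N!/j!) (4x)^{N−j} Γ(2j+1, 2x)`. -/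
theorem statement3 (N : ℕ) (hN : 1 ≤ N) (x : ℝ) (hx : 0 ≤ x) :
    fAII N x = Real.exp (2 * x) *
      ∑ j ∈ Finset.range (N + 1),
        ((Nat.factorial N : ℝ) / (Nat.factorial j : ℝ)) * (4 * x) ^ (N - j) *
          upperGamma (2 * j + 1) (2 * x) := by
  exact main_all x hx N
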